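/- Fix integers c ≥ 2 and h ≥ 1 and a nonzero real number α, and let T_{c,h,α} be the perfect c-ary tree of height h with every edge weight equal to α. Then g(T_{c,h,α}; n) ≈ n^(c^h): there is a constant C > 0 such that every set of n points in ℝ² contains at most C · n^(c^h) dot product T_{c,h,α}-configurations, and there exist a constant c' > 0 and N such that for every n > N some set of n points in ℝ² contains at least c' · n^(c^h) dot product T_{c,h,α}-configurations. -/

import Mathlib

open scoped InnerProductSpace

noncomputable section

/-- Points in the plane. -/
abbrev Pt2 : Type := EuclideanSpace ℝ (Fin 2)

/-- The vertex set of the perfect `c`-ary rooted tree `T_{c,h}` of height `h`: a vertex is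
a list of child-selectors of length at most `h` (the root is the empty list, and the
leaves are the lists of length exactly `h`). -/
def TreeVert (c h : ℕ) : Type := {l : List (Fin c) // l.length ≤ h}

/-- Adjacency in the perfect `c`-ary tree `T_{c,h}`: a vertex is adjacent precisely to its
parent and to its children. -/
def treeAdj (c h : ℕ) (u v : TreeVert c h) : Prop :=
  (∃ i : Fin c, u.1 = i :: v.1) ∨ (∃ i : Fin c, v.1 = i :: u.1)

/-- The set of dot product `T_{c,h,α}`-configurations in a point set `E`, where every
edge of `T_{c,h}` carries the same weight `α`: injective maps `φ` from the vertices of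
`T_{c,h}` into `E` such that the dot product of the images of any two adjacent vertices
equals `α`. -/
def dpTreeConfigs (c h : ℕ) (α : ℝ) (E : Finset Pt2) : Set (TreeVert c h → Pt2) :=
  {φ | (∀ v, φ v ∈ E) ∧ Function.Injective φ ∧
    ∀ u v, treeAdj c h u v → ⟪φ u, φ v⟫_ℝ = α}

def mk2 (a b : ℝ) : Pt2 := WithLp.toLp 2 ![a, b]

lemma inner_pt2 (x y : Pt2) : ⟪x,y⟫_ℝ = x 0 * y 0 + x 1 * y 1 := by
  simp [PiLp.inner_apply, Fin.sum_univ_two, RCLike.inner_apply]; ring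

lemma pt2_ext {p q : Pt2} (h0 : p 0 = q 0) (h1 : p 1 = q 1) : p = q := by
  ext i; fin_cases i <;> assumption

instance : Infinite Pt2 :=
  Infinite.of_injective (fun t : ℝ => mk2 t 0) (fun s t h => congrArg (fun p : Pt2 => p 0) h)

lemma key_unique {α p0 p1 q0 q1 x0 x1 y0 y1 : ℝ} (hα : α ≠ 0)
    (hpq : ¬(p0 = q0 ∧ p1 = q1))
    (h1 : p0*x0+p1*x1 = α) (h2 : q0*x0+q1*x1 = α)
    (h3 : p0*y0+p1*y1 = α) (h4 : q0*y0+q1*y1 = α) :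
    x0 = y0 ∧ x1 = y1 := by
  by_cases hD : p0*q1 - p1*q0 = 0
  · exfalso
    apply hpq
    have e1 : (p0 - q0) * α = 0 := by linear_combination x1*hD - p0*h2 + q0*h1
    have e2 : (p1 - q1) * α = 0 := by linear_combination -x0*hD - p1*h2 + q1*h1
    have f1 := (mul_eq_zero.1 e1).resolve_right hα
    have f2 := (mul_eq_zero.1 e2).resolve_right hα
    exact ⟨by linarith, by linarith⟩
  · have d0 : (p0*q1 - p1*q0) * (x0 - y0) = 0 := by
      linear_combination q1*h1 - q1*h3 - p1*h2 + p1*h4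
    have d1 : (p0*q1 - p1*q0) * (x1 - y1) = 0 := by
      linear_combination p0*h2 - p0*h4 - q0*h1 + q0*h3
    constructor
    · have := (mul_eq_zero.1 d0).resolve_left hD; linarith
    · have := (mul_eq_zero.1 d1).resolve_left hD; linarith

lemma pt2_unique {α : ℝ} (hα : α ≠ 0) {p q x y : Pt2} (hpq : p ≠ q)
    (h1 : ⟪p,x⟫_ℝ = α) (h2 : ⟪q,x⟫_ℝ = α) (h3 : ⟪p,y⟫_ℝ = α) (h4 : ⟪q,y⟫_ℝ = α) : x = y := by
  rw [inner_pt2] at h1 h2 h3 h4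
  have hpq' : ¬(p 0 = q 0 ∧ p 1 = q 1) := fun ⟨a, b⟩ => hpq (pt2_ext a b)
  obtain ⟨hx0, hx1⟩ := key_unique hα hpq' h1 h2 h3 h4
  exact pt2_ext hx0 hx1

/-- The line of points with dot product `α` with `p`. -/
def lineSet (α : ℝ) (p : Pt2) : Set Pt2 := {x | ⟪p, x⟫_ℝ = α}

lemma lineSet_def (α : ℝ) (p x : Pt2) : x ∈ lineSet α p ↔ ⟪p, x⟫_ℝ = α := Iff.rfl

lemma zero_not_mem_line {α : ℝ} (hα : α ≠ 0) (p : Pt2) : (0 : Pt2) ∉ lineSet α p := by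
  simp only [lineSet, Set.mem_setOf_eq, inner_zero_right]
  exact fun h => hα h.symm

lemma pt2_ne_zero_iff {p : Pt2} : p ≠ 0 ↔ (p 0 ≠ 0 ∨ p 1 ≠ 0) := by
  constructor
  · intro h
    by_contra hcon
    push_neg at hcon
    exact h (pt2_ext (by simpa using hcon.1) (by simpa using hcon.2))
  · rintro (h | h) rfl <;> simp at h

lemma line_infinite {α : ℝ} (hα : α ≠ 0) {p : Pt2} (hp : p ≠ 0) : (lineSet α p).Infinite := by
  set a := p 0 with ha
  set b := p 1 with hb
  have hs : a^2 + b^2 ≠ 0 := by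
    rcases pt2_ne_zero_iff.1 hp with h | h <;> positivity
  apply Set.infinite_of_injective_forall_mem
    (f := fun t : ℝ => mk2 (α*a/(a^2+b^2) - t*b) (α*b/(a^2+b^2) + t*a))
  · intro s t hst
    have h0 : α*a/(a^2+b^2) - s*b = α*a/(a^2+b^2) - t*b := congrArg (fun p : Pt2 => p 0) hst
    have h1 : α*b/(a^2+b^2) + s*a = α*b/(a^2+b^2) + t*a := congrArg (fun p : Pt2 => p 1) hst
    rcases pt2_ne_zero_iff.1 hp with h | h
    · have : s * a = t * a := by linarith
      exact mul_right_cancel₀ h this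
    · have : s * b = t * b := by linarith
      exact mul_right_cancel₀ h this
  · intro t
    show ⟪p, _⟫_ℝ = α
    rw [inner_pt2]
    show a * (α*a/(a^2+b^2) - t*b) + b * (α*b/(a^2+b^2) + t*a) = α
    field_simp
    ring

lemma line_inter_subsingleton {α : ℝ} (hα : α ≠ 0) {p q : Pt2} (hpq : p ≠ q) :
    (lineSet α p ∩ lineSet α q).Subsingleton := fun x hx y hy =>
  pt2_unique hα hpq hx.1 hx.2 hy.1 hy.2

/-- Extension lemma: choose, for each index `i`, `m` points on the line of `q i`,
all distinct across indices and avoiding a finite set `F`. -/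
lemma extension {α : ℝ} (hα : α ≠ 0) {ι : Type} [Fintype ι] (q : ι → Pt2)
    (hq0 : ∀ i, q i ≠ 0) (hqinj : Function.Injective q) {F : Set Pt2} (hF : F.Finite) (m : ℕ) :
    ∃ e : ι → (Fin m ↪ Pt2), (∀ i j, e i j ∈ lineSet α (q i)) ∧ (∀ i j, e i j ∉ F) ∧
      (∀ i u : ι, ∀ jm jn, e i jm = e u jn → i = u ∧ jm = jn) := by
  classical
  have hbad : ∀ i : ι, (F ∪ ⋃ u ∈ ({i}ᶜ : Set ι), (lineSet α (q u) ∩ lineSet α (q i))).Finite := by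
    intro i
    refine hF.union (Set.Finite.biUnion (Set.finite_univ.subset (Set.subset_univ _)) ?_)
    intro u hu
    exact Set.Subsingleton.finite (line_inter_subsingleton hα (fun h => hu (hqinj h)))
  have hG : ∀ i : ι, (lineSet α (q i) \
      (F ∪ ⋃ u ∈ ({i}ᶜ : Set ι), (lineSet α (q u) ∩ lineSet α (q i)))).Infinite :=
    fun i => (line_infinite hα (hq0 i)).diff (hbad i)
  have hchoice : ∀ i : ι, ∃ t : Finset Pt2, ↑t ⊆ (lineSet α (q i) \
      (F ∪ ⋃ u ∈ ({i}ᶜ : Set ι), (lineSet α (q u) ∩ lineSet α (q i)))) ∧ t.card = m :=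
    fun i => (hG i).exists_subset_card_eq m
  choose t ht hcard using hchoice
  let e : ι → (Fin m ↪ Pt2) := fun i =>
    ⟨fun j => ((t i).equivFin.symm (Fin.cast (hcard i).symm j)).1,
     fun a b hab => by
       have := (t i).equivFin.symm.injective (Subtype.val_injective hab)
       simpa [Fin.ext_iff] using this⟩
  have hemem : ∀ i j, e i j ∈ t i := fun i j => ((t i).equivFin.symm (Fin.cast (hcard i).symm j)).2
  refine ⟨e, ?_, ?_, ?_⟩
  · exact fun i j => ((ht i) (hemem i j)).1
  · exact fun i j hmem => ((ht i) (hemem i j)).2 (Or.inl hmem)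
  · intro i u jm jn hequ
    have hiu : i = u := by
      by_contra hne
      have h1 := (ht i) (hemem i jm)
      have h2 := (ht u) (hemem u jn)
      rw [hequ] at h1
      exact h1.2 (Or.inr (Set.mem_biUnion (by simp [Ne.symm hne]) ⟨h2.1, h1.1⟩))
    subst hiu
    exact ⟨rfl, (e i).injective hequ⟩

lemma mk2_ne_zero : mk2 1 0 ≠ 0 := by
  intro h
  have : (1:ℝ) = 0 := congrArg (fun p : Pt2 => p 0) h
  norm_num at this

lemma skeleton {α : ℝ} (hα : α ≠ 0) (c : ℕ) (j : ℕ) :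
    ∃ q : List (Fin c) → Pt2,
      Set.InjOn q {l | l.length ≤ j} ∧ (∀ l : List (Fin c), l.length ≤ j → q l ≠ 0) ∧
      (∀ (i : Fin c) (l : List (Fin c)), l.length + 1 ≤ j → ⟪q l, q (i :: l)⟫_ℝ = α) := by
  classical
  induction j with
  | zero =>
    refine ⟨fun _ => mk2 1 0, ?_, fun l _ => mk2_ne_zero, fun i l hl => by omega⟩
    intro l₁ h₁ l₂ h₂ _
    simp only [Set.mem_setOf_eq, Nat.le_zero, List.length_eq_zero_iff] at h₁ h₂
    rw [h₁, h₂]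
  | succ j ih =>
    obtain ⟨q, hinj, hq0, hadj⟩ := ih
    have hF : (q '' {l : List (Fin c) | l.length ≤ j}).Finite :=
      (List.finite_length_le (Fin c) j).image q
    obtain ⟨e, hemem, henotF, heinj⟩ := extension hα
      (fun v : List.Vector (Fin c) j => q v.1)
      (fun v => hq0 v.1 v.2.le)
      (fun v w hvw => Subtype.ext (hinj v.2.le w.2.le hvw)) hF c
    let q' : List (Fin c) → Pt2 := fun l => match l with
      | [] => q []
      | a :: t => if ht : t.length = j then e ⟨t, ht⟩ a else q (a :: t)
    have hq'_old : ∀ l : List (Fin c), l.length ≤ j → q' l = q l := by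
      intro l hl
      match l with
      | [] => rfl
      | a :: t => exact dif_neg (by simp at hl; omega)
    have hq'_new : ∀ (a : Fin c) (t : List (Fin c)) (ht : t.length = j),
        q' (a :: t) = e ⟨t, ht⟩ a := fun a t ht => dif_pos ht
    refine ⟨q', ?_, ?_, ?_⟩
    · -- injectivity
      intro l₁ h₁ l₂ h₂ heq
      simp only [Set.mem_setOf_eq] at h₁ h₂
      match l₁, l₂ with
      | [], [] => rfl
      | [], a :: t =>
        rw [hq'_old [] (by simp)] at heq
        by_cases ht : t.length = j
        · rw [hq'_new a t ht] at heq
          exact absurd (Set.mem_image_of_mem q (show ([] : List (Fin c)) ∈ _ by simp))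
            (heq ▸ henotF _ _)
        · rw [hq'_old (a :: t) (by simp at h₂ ⊢; omega)] at heq
          exact hinj (by simp) (by simp at h₂ ⊢; omega) heq
      | a :: t, [] =>
        rw [hq'_old [] (by simp)] at heq
        by_cases ht : t.length = j
        · rw [hq'_new a t ht] at heq
          exact absurd (Set.mem_image_of_mem q (show ([] : List (Fin c)) ∈ _ by simp))
            (heq ▸ henotF _ _)
        · rw [hq'_old (a :: t) (by simp at h₁ ⊢; omega)] at heq
          exact hinj (by simp at h₁ ⊢; omega) (by simp) heq
      | a₁ :: t₁, a₂ :: t₂ =>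
        by_cases ht₁ : t₁.length = j <;> by_cases ht₂ : t₂.length = j
        · rw [hq'_new a₁ t₁ ht₁, hq'_new a₂ t₂ ht₂] at heq
          obtain ⟨hv, hh⟩ := heinj _ _ _ _ heq
          have : t₁ = t₂ := congrArg Subtype.val hv
          rw [this, hh]
        · rw [hq'_new a₁ t₁ ht₁, hq'_old (a₂ :: t₂) (by simp at h₂ ⊢; omega)] at heq
          exact absurd (Set.mem_image_of_mem q
            (show (a₂ :: t₂) ∈ {l : List (Fin c) | l.length ≤ j} by simp at h₂ ⊢; omega))
            (heq ▸ henotF _ _)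
        · rw [hq'_new a₂ t₂ ht₂, hq'_old (a₁ :: t₁) (by simp at h₁ ⊢; omega)] at heq
          exact absurd (Set.mem_image_of_mem q
            (show (a₁ :: t₁) ∈ {l : List (Fin c) | l.length ≤ j} by simp at h₁ ⊢; omega))
            (heq.symm ▸ henotF _ _)
        · rw [hq'_old (a₁ :: t₁) (by simp at h₁ ⊢; omega),
            hq'_old (a₂ :: t₂) (by simp at h₂ ⊢; omega)] at heq
          exact hinj (by simp at h₁ ⊢; omega) (by simp at h₂ ⊢; omega) heq
    · -- nonzero
      intro l hl
      match l with
      | [] =>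
        rw [hq'_old [] (by simp)]
        exact hq0 [] (by simp)
      | a :: t =>
        by_cases ht : t.length = j
        · rw [hq'_new a t ht]
          intro hzero
          exact zero_not_mem_line hα _ (hzero ▸ hemem _ _)
        · rw [hq'_old (a :: t) (by simp at hl ⊢; omega)]
          exact hq0 _ (by simp at hl ⊢; omega)
    · -- adjacency
      intro i l hl
      by_cases h : l.length = j
      · rw [hq'_old l (by omega), hq'_new i l h]
        have := hemem ⟨l, h⟩ i
        rw [lineSet_def] at this
        exact this
      · rw [hq'_old l (by omega), hq'_old (i :: l) (by simp; omega)]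
        exact hadj i l (by omega)

instance treeVertFinite (c h : ℕ) : Finite (TreeVert c h) :=
  (List.finite_length_le (Fin c) h).to_subtype

lemma configs_finite (c h : ℕ) (α : ℝ) (E : Finset Pt2) : (dpTreeConfigs c h α E).Finite := by
  have : dpTreeConfigs c h α E ⊆ Set.pi Set.univ (fun _ : TreeVert c h => (E : Set Pt2)) :=
    fun φ hφ v _ => hφ.1 v
  exact (Set.Finite.pi (fun _ => E.finite_toSet)).subset this

/-- A configuration is determined by its values on the leaves. -/
lemma leaf_determined {c h : ℕ} (hc : 2 ≤ c) {α : ℝ} (hα : α ≠ 0) {E : Finset Pt2}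
    {φ ψ : TreeVert c h → Pt2} (hφ : φ ∈ dpTreeConfigs c h α E)
    (hψ : ψ ∈ dpTreeConfigs c h α E)
    (hagree : ∀ v : TreeVert c h, v.1.length = h → φ v = ψ v) : φ = ψ := by
  have key : ∀ (k : ℕ) (v : TreeVert c h), h - v.1.length ≤ k → φ v = ψ v := by
    intro k
    induction k with
    | zero => exact fun v hv => hagree v (by have := v.2; omega)
    | succ k ih =>
      intro v hv
      by_cases hlen : v.1.length = h
      · exact hagree v hlen
      · have hlt : v.1.length < h := lt_of_le_of_ne v.2 hlen
        set v0 : TreeVert c h := ⟨(⟨0, by omega⟩ : Fin c) :: v.1, by simp; omega⟩ with hv0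
        set v1 : TreeVert c h := ⟨(⟨1, by omega⟩ : Fin c) :: v.1, by simp; omega⟩ with hv1
        have h01 : v0 ≠ v1 := by
          intro hcon
          have := congrArg Subtype.val hcon
          simp [hv0, hv1, Fin.ext_iff] at this
        have hlen0 : (v0.1).length = v.1.length + 1 := by simp [hv0]
        have hlen1 : (v1.1).length = v.1.length + 1 := by simp [hv1]
        have hadj0 : treeAdj c h v0 v := Or.inl ⟨_, rfl⟩
        have hadj1 : treeAdj c h v1 v := Or.inl ⟨_, rfl⟩
        have he0 : φ v0 = ψ v0 := ih v0 (by omega)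
        have he1 : φ v1 = ψ v1 := ih v1 (by omega)
        have hne : φ v0 ≠ φ v1 := fun hcon => h01 (hφ.2.1 hcon)
        have a1 : ⟪φ v0, φ v⟫_ℝ = α := hφ.2.2 v0 v hadj0
        have a2 : ⟪φ v1, φ v⟫_ℝ = α := hφ.2.2 v1 v hadj1
        have a3 : ⟪φ v0, ψ v⟫_ℝ = α := by rw [he0]; exact hψ.2.2 v0 v hadj0
        have a4 : ⟪φ v1, ψ v⟫_ℝ = α := by rw [he1]; exact hψ.2.2 v1 v hadj1
        exact pt2_unique hα hne a1 a2 a3 a4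
  funext v
  exact key (h - v.1.length) v le_rfl

lemma upper_bound {c h : ℕ} (hc : 2 ≤ c) {α : ℝ} (hα : α ≠ 0) (E : Finset Pt2) :
    (dpTreeConfigs c h α E).ncard ≤ E.card ^ (c ^ h) := by
  classical
  set Leaf := List.Vector (Fin c) h
  set ρ : (TreeVert c h → Pt2) → Leaf → Pt2 := fun φ l => φ ⟨l.1, l.2.le⟩ with hρ
  have hinj : Set.InjOn ρ (dpTreeConfigs c h α E) := by
    intro φ hφ ψ hψ heq
    refine leaf_determined hc hα hφ hψ ?_
    intro v hv
    have h2 : (⟨v.1, hv.le⟩ : TreeVert c h) = v := Subtype.ext rfl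
    have := congrFun heq (⟨v.1, hv⟩ : Leaf)
    simpa [hρ, h2] using this
  rw [← Set.ncard_image_of_injOn hinj]
  have hsub : ρ '' (dpTreeConfigs c h α E) ⊆ ↑(Fintype.piFinset fun _ : Leaf => E) := by
    rintro f ⟨φ, hφ, rfl⟩
    simp only [Finset.coe_sort_coe, Fintype.coe_piFinset, Set.mem_pi, Set.mem_univ,
      forall_true_left]
    exact fun l => hφ.1 _
  calc (ρ '' (dpTreeConfigs c h α E)).ncard
      ≤ (↑(Fintype.piFinset fun _ : Leaf => E) : Set (Leaf → Pt2)).ncard :=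
        Set.ncard_le_ncard hsub (Finset.finite_toSet _)
    _ = (Fintype.piFinset fun _ : Leaf => E).card := Set.ncard_coe_finset _
    _ = E.card ^ (c ^ h) := by
        rw [Fintype.card_piFinset]
        simp [Leaf, card_vector]

lemma lower_bound {c h : ℕ} (hc : 2 ≤ c) (hh : 1 ≤ h) {α : ℝ} (hα : α ≠ 0) :
    ∃ c' : ℝ, 0 < c' ∧ ∃ N : ℕ, ∀ n : ℕ, N < n →
      ∃ E : Finset Pt2, E.card = n ∧
        c' * (n : ℝ) ^ (c ^ h) ≤ ((dpTreeConfigs c h α E).ncard : ℝ) := by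
  classical
  obtain ⟨q, hinj, hq0, hadj⟩ := skeleton hα c (h - 1)
  have hIntFin : ({l : List (Fin c) | l.length ≤ h - 1}).Finite :=
    List.finite_length_le (Fin c) (h - 1)
  set intPts : Finset Pt2 := hIntFin.toFinset.image q with hintPts
  set I := intPts.card with hI
  set k := c ^ (h - 1) with hk
  have hkpos : 0 < k := pow_pos (by omega) _
  obtain ⟨B, hB⟩ : ∃ B, k * c = B := ⟨_, rfl⟩
  refine ⟨(1 / (2 * (k:ℝ))) ^ (c ^ h), by positivity, 2 * I + 2 * B + 2 * k, ?_⟩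
  intro n hn
  set M := (n - I) / k with hM
  set r := (n - I) % k with hr
  obtain ⟨A, hA⟩ : ∃ A, k * M = A := ⟨_, rfl⟩
  have hIn : I ≤ n := by omega
  have hsum : I + (A + r) = n := by
    have h0 := Nat.div_add_mod (n - I) k
    rw [← hM, ← hr, hA] at h0
    omega
  have hrk : r < k := Nat.mod_lt _ hkpos
  -- M is large
  have hcM : c ≤ M := by
    by_contra hcon
    push_neg at hcon
    have h1 : k * M ≤ k * (c - 1) := Nat.mul_le_mul_left k (by omega)
    have h2 : k * (c - 1) + k = k * c := by
      have h3 : c - 1 + 1 = c := by omega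
      calc k * (c - 1) + k = k * ((c - 1) + 1) := by ring
        _ = k * c := by rw [h3]
    rw [hA] at h1
    rw [hB] at h2
    omega
  -- the leaf points
  set ι := List.Vector (Fin c) (h - 1) with hι
  obtain ⟨e, hemem, henotF, heinj⟩ := extension hα
    (fun v : ι => q v.1)
    (fun v => hq0 v.1 v.2.le)
    (fun v w hvw => Subtype.ext (hinj v.2.le w.2.le hvw))
    (hIntFin.image q) M
  have hcardι : Fintype.card ι = k := by simp [hι, hk, card_vector]
  set leafPts : Finset Pt2 := Finset.univ.biUnion
    (fun i : ι => Finset.univ.map (e i)) with hleafPts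
  have hILdisj : Disjoint intPts leafPts := by
    rw [Finset.disjoint_left]
    intro x hxI hxL
    rw [hleafPts, Finset.mem_biUnion] at hxL
    obtain ⟨i, -, hxL⟩ := hxL
    rw [Finset.mem_map] at hxL
    obtain ⟨j, -, rfl⟩ := hxL
    rw [hintPts, Finset.mem_image] at hxI
    obtain ⟨l, hl, hql⟩ := hxI
    rw [Set.Finite.mem_toFinset] at hl
    exact henotF i j ⟨l, hl, hql⟩
  have hleafcard : leafPts.card = k * M := by
    rw [hleafPts, Finset.card_biUnion]
    · simp only [Finset.card_map, Finset.card_univ, Finset.sum_const, smul_eq_mul, hcardι,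
        Fintype.card_fin]
    · intro i hi u hu hiu
      rw [Function.onFun, Finset.disjoint_left]
      rintro x hx1 hx2
      rw [Finset.mem_map] at hx1 hx2
      obtain ⟨j1, -, rfl⟩ := hx1
      obtain ⟨j2, -, h12⟩ := hx2
      exact hiu (heinj u i j2 j1 h12).1.symm
  -- padding
  obtain ⟨pad, hpadsub, hpadcard⟩ :=
    (Set.infinite_univ.diff (intPts ∪ leafPts).finite_toSet).exists_subset_card_eq r
  have hpaddisj : Disjoint (intPts ∪ leafPts) pad := by
    rw [Finset.disjoint_right]
    intro x hx hxu
    exact (hpadsub hx).2 hxu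
  set E : Finset Pt2 := (intPts ∪ leafPts) ∪ pad with hE
  have hEcard : E.card = n := by
    rw [hE, Finset.card_union_of_disjoint hpaddisj,
      Finset.card_union_of_disjoint hILdisj, hleafcard, hpadcard]
    omega
  refine ⟨E, hEcard, ?_⟩
  -- the configurations
  set Φ : (ι → (Fin c ↪ Fin M)) → List (Fin c) → Pt2 := fun g l => match l with
    | [] => q []
    | a :: t => if ht : t.length = h - 1 then e ⟨t, ht⟩ ((g ⟨t, ht⟩) a) else q (a :: t)
    with hΦ
  have hΦ_old : ∀ g l, l.length ≤ h - 1 → Φ g l = q l := by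
    intro g l hl
    match l with
    | [] => rfl
    | a :: t => exact dif_neg (by simp at hl; omega)
  have hΦ_new : ∀ g (a : Fin c) (t : List (Fin c)) (ht : t.length = h - 1),
      Φ g (a :: t) = e ⟨t, ht⟩ ((g ⟨t, ht⟩) a) := fun g a t ht => dif_pos ht
  have hmem : ∀ g (v : TreeVert c h), Φ g v.1 ∈ E := by
    intro g v
    obtain ⟨l, hl⟩ := v
    match l with
    | [] =>
      rw [hΦ_old g [] (by simp)]
      refine Finset.mem_union_left _ (Finset.mem_union_left _ ?_)
      rw [hintPts, Finset.mem_image]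
      exact ⟨[], by rw [Set.Finite.mem_toFinset]; simp, rfl⟩
    | a :: t =>
      by_cases ht : t.length = h - 1
      · rw [hΦ_new g a t ht]
        refine Finset.mem_union_left _ (Finset.mem_union_right _ ?_)
        rw [hleafPts, Finset.mem_biUnion]
        exact ⟨⟨t, ht⟩, Finset.mem_univ _, Finset.mem_map.2 ⟨_, Finset.mem_univ _, rfl⟩⟩
      · have hlt : (a :: t).length ≤ h - 1 := by simp at hl ⊢; omega
        rw [hΦ_old g _ hlt]
        refine Finset.mem_union_left _ (Finset.mem_union_left _ ?_)
        rw [hintPts, Finset.mem_image]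
        exact ⟨a :: t, by rw [Set.Finite.mem_toFinset]; exact hlt, rfl⟩
  have hΦinj : ∀ g, Function.Injective (fun v : TreeVert c h => Φ g v.1) := by
    intro g v₁ v₂ heq
    simp only at heq
    apply Subtype.ext
    obtain ⟨l₁, h₁⟩ := v₁
    obtain ⟨l₂, h₂⟩ := v₂
    show l₁ = l₂
    match l₁, l₂ with
    | [], [] => rfl
    | [], a :: t =>
      rw [hΦ_old g [] (by simp)] at heq
      by_cases ht : t.length = h - 1
      · rw [hΦ_new g a t ht] at heq
        exact absurd (Set.mem_image_of_mem q (show ([] : List (Fin c)) ∈ _ by simp))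
          (heq ▸ henotF _ _)
      · rw [hΦ_old g (a :: t) (by simp at h₂ ⊢; omega)] at heq
        exact hinj (by simp) (by simp at h₂ ⊢; omega) heq
    | a :: t, [] =>
      rw [hΦ_old g [] (by simp)] at heq
      by_cases ht : t.length = h - 1
      · rw [hΦ_new g a t ht] at heq
        exact absurd (Set.mem_image_of_mem q (show ([] : List (Fin c)) ∈ _ by simp))
          (heq ▸ henotF _ _)
      · rw [hΦ_old g (a :: t) (by simp at h₁ ⊢; omega)] at heq
        exact hinj (by simp at h₁ ⊢; omega) (by simp) heq
    | a₁ :: t₁, a₂ :: t₂ =>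
      by_cases ht₁ : t₁.length = h - 1 <;> by_cases ht₂ : t₂.length = h - 1
      · rw [hΦ_new g a₁ t₁ ht₁, hΦ_new g a₂ t₂ ht₂] at heq
        obtain ⟨hv, hx⟩ := heinj _ _ _ _ heq
        have htl : t₁ = t₂ := congrArg Subtype.val hv
        subst htl
        have := (g ⟨t₁, ht₁⟩).injective hx
        rw [this]
      · rw [hΦ_new g a₁ t₁ ht₁, hΦ_old g (a₂ :: t₂) (by simp at h₂ ⊢; omega)] at heq
        exact absurd (Set.mem_image_of_mem q
          (show (a₂ :: t₂) ∈ {l : List (Fin c) | l.length ≤ h - 1} by simp at h₂ ⊢; omega))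
          (heq ▸ henotF _ _)
      · rw [hΦ_new g a₂ t₂ ht₂, hΦ_old g (a₁ :: t₁) (by simp at h₁ ⊢; omega)] at heq
        exact absurd (Set.mem_image_of_mem q
          (show (a₁ :: t₁) ∈ {l : List (Fin c) | l.length ≤ h - 1} by simp at h₁ ⊢; omega))
          (heq.symm ▸ henotF _ _)
      · rw [hΦ_old g (a₁ :: t₁) (by simp at h₁ ⊢; omega),
          hΦ_old g (a₂ :: t₂) (by simp at h₂ ⊢; omega)] at heq
        exact hinj (by simp at h₁ ⊢; omega) (by simp at h₂ ⊢; omega) heq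
  have hΦadj : ∀ g (i : Fin c) (l : List (Fin c)), l.length + 1 ≤ h →
      ⟪Φ g l, Φ g (i :: l)⟫_ℝ = α := by
    intro g i l hl
    by_cases ht : l.length = h - 1
    · rw [hΦ_old g l (by omega), hΦ_new g i l ht]
      have := hemem ⟨l, ht⟩ ((g ⟨l, ht⟩) i)
      rw [lineSet_def] at this
      exact this
    · rw [hΦ_old g l (by omega), hΦ_old g (i :: l) (by simp; omega)]
      exact hadj i l (by omega)
  have hconf : ∀ g, (fun v : TreeVert c h => Φ g v.1) ∈ dpTreeConfigs c h α E := by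
    intro g
    refine ⟨hmem g, hΦinj g, ?_⟩
    rintro u v (⟨i, hi⟩ | ⟨i, hi⟩)
    · have hlen : v.1.length + 1 ≤ h := by
        have := u.2; rw [hi] at this; simpa using this
      have := hΦadj g i v.1 hlen
      rw [real_inner_comm] at this
      simpa only [hi] using this
    · have hlen : u.1.length + 1 ≤ h := by
        have := v.2; rw [hi] at this; simpa using this
      have := hΦadj g i u.1 hlen
      simpa only [hi] using this
  -- counting
  have hmapinj : Function.Injective
      (fun (g : ι → (Fin c ↪ Fin M)) => (fun v : TreeVert c h => Φ g v.1)) := by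
    intro g g' heq
    funext i
    apply DFunLike.ext
    intro a
    have hlen : (a :: i.1).length ≤ h := by
      have := i.2; simp [this]; omega
    have := congrFun heq (⟨a :: i.1, hlen⟩ : TreeVert c h)
    simp only at this
    rw [hΦ_new g a i.1 i.2, hΦ_new g' a i.1 i.2] at this
    have h2 := (heinj _ _ _ _ this).2
    have hi : (⟨i.1, i.2⟩ : ι) = i := rfl
    rw [hi] at h2
    exact h2
  set GS : Finset (TreeVert c h → Pt2) :=
    Finset.univ.image (fun (g : ι → (Fin c ↪ Fin M)) => (fun v : TreeVert c h => Φ g v.1))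
    with hGS
  have hGSsub : ↑GS ⊆ dpTreeConfigs c h α E := by
    intro f hf
    rw [hGS] at hf
    simp only [Finset.coe_image, Set.mem_image] at hf
    obtain ⟨g, -, rfl⟩ := hf
    exact hconf g
  have hGScard : GS.card = (M.descFactorial c) ^ k := by
    rw [hGS, Finset.card_image_of_injective _ hmapinj, Finset.card_univ,
      Fintype.card_fun, Fintype.card_embedding_eq, Fintype.card_fin, Fintype.card_fin, hcardι]
  have hcount : (M.descFactorial c) ^ k ≤ (dpTreeConfigs c h α E).ncard := by
    rw [← hGScard, ← Set.ncard_coe_finset]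
    exact Set.ncard_le_ncard hGSsub (configs_finite c h α E)
  -- arithmetic
  have hstep : (M + 1 - c) ^ (c ^ h) ≤ (M.descFactorial c) ^ k := by
    have h1 : c ^ h = c * k := by
      rw [hk, ← pow_succ']
      congr 1
      omega
    rw [h1, pow_mul]
    exact Nat.pow_le_pow_left (Nat.pow_sub_le_descFactorial M c) k
  have hreal : (n : ℝ) ≤ 2 * (k:ℝ) * ((M + 1 - c : ℕ) : ℝ) := by
    have hcast : ((M + 1 - c : ℕ) : ℝ) = (M : ℝ) + 1 - c := by
      push_cast [Nat.cast_sub (by omega : c ≤ M + 1)]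
      ring
    rw [hcast]
    have c1 : ((A : ℕ) : ℝ) = (k : ℝ) * (M : ℝ) := by rw [← hA]; push_cast; ring
    have c2 : ((B : ℕ) : ℝ) = (k : ℝ) * (c : ℝ) := by rw [← hB]; push_cast; ring
    have c3 : ((I : ℕ) : ℝ) + ((A : ℕ) : ℝ) + ((r : ℕ) : ℝ) = (n : ℝ) := by
      exact_mod_cast congrArg (fun x : ℕ => (x : ℝ)) (by omega : I + A + r = n)
    have c4 : ((r : ℕ) : ℝ) + 1 ≤ (k : ℝ) := by exact_mod_cast hrk
    have c5 : 2 * ((I : ℕ) : ℝ) + 2 * ((B : ℕ) : ℝ) + 2 * ((k : ℕ) : ℝ) + 1 ≤ (n : ℝ) := by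
      exact_mod_cast (by omega : 2 * I + 2 * B + 2 * k + 1 ≤ n)
    nlinarith [c1, c2, c3, c4, c5]
  calc (1 / (2 * (k:ℝ))) ^ (c ^ h) * (n : ℝ) ^ (c ^ h)
      = ((n : ℝ) / (2 * (k:ℝ))) ^ (c ^ h) := by
        rw [div_pow, div_pow]
        ring
    _ ≤ (((M + 1 - c : ℕ) : ℝ)) ^ (c ^ h) := by
        apply pow_le_pow_left₀ (by positivity)
        rw [div_le_iff₀ (by positivity)]
        linarith [hreal]
    _ = (((M + 1 - c) ^ (c ^ h) : ℕ) : ℝ) := by push_cast; ring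
    _ ≤ ((dpTreeConfigs c h α E).ncard : ℝ) := by
        exact_mod_cast le_trans hstep hcount

/-- **dot product configurations on perfect `c`-ary trees with constant
weight, in the plane.**  Fix `c ≥ 2`, `h ≥ 1`, and `α ≠ 0`.  Then
`g(T_{c,h,α}; n) ≈ n^(c^h)`: there is `C > 0` such that every set of `n` points in the
plane has at most `C · n^(c^h)` dot product `T_{c,h,α}`-configurations, and there are
`c' > 0` and `N` such that for every `n > N` some set of `n` points in the plane has at
least `c' · n^(c^h)` of them. -/
theorem dotProduct_tree_bounds (c h : ℕ) (hc : 2 ≤ c) (hh : 1 ≤ h) (α : ℝ) (hα : α ≠ 0) :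
    (∃ C : ℝ, 0 < C ∧ ∀ (n : ℕ) (E : Finset Pt2), E.card = n →
      ((dpTreeConfigs c h α E).ncard : ℝ) ≤ C * (n : ℝ) ^ (c ^ h)) ∧
    (∃ c' : ℝ, 0 < c' ∧ ∃ N : ℕ, ∀ n : ℕ, N < n →
      ∃ E : Finset Pt2, E.card = n ∧
        c' * (n : ℝ) ^ (c ^ h) ≤ ((dpTreeConfigs c h α E).ncard : ℝ)) := by
  constructor
  · refine ⟨1, one_pos, ?_⟩
    intro n E hEn
    rw [one_mul]
    have hub := upper_bound (h := h) hc hα E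
    calc ((dpTreeConfigs c h α E).ncard : ℝ)
        ≤ ((E.card ^ (c ^ h) : ℕ) : ℝ) := by exact_mod_cast hub
      _ = (n : ℝ) ^ (c ^ h) := by rw [hEn]; push_cast; ring
  · exact lower_bound hc hh hα
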